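/- Fix data (y_i,x_i)_{i=1}^n and tau > 0. Let E be a subset of {1,...,d} and beta* in R^d with beta*_j = 0 for all j not in E. Let lambda in R^d have nonnegative entries, let eps > 0 and lambda_0 > 0 satisfy lambda_0 >= ||lambda||_inf, lambda_0 >= 4*(||grad L_hat_tau(beta*)||_inf + eps), and min_{j not in E} lambda_j >= lambda_0/2. Then every eps-optimal solution beta_tilde of min_beta { L_hat_tau(beta) + ||lambda o beta||_1 } satisfies ||(beta_tilde - beta*)_{E^c}||_1 <= [ (||lambda||_inf + ||grad L_hat_tau(beta*)||_inf + eps) / ( min_{j not in E} lambda_j - ||grad L_hat_tau(beta*)||_inf - eps ) ] * ||(beta_tilde - beta*)_E||_1, and consequently ||(beta_tilde - beta*)_{E^c}||_1 <= 5*||(beta_tilde - beta*)_E||_1. -/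

import Mathlib

set_option autoImplicit false

open MeasureTheory ProbabilityTheory Filter

noncomputable section

/-- The Huber loss with robustification parameter `τ`. -/
def huber (τ x : ℝ) : ℝ := if |x| ≤ τ then x ^ 2 / 2 else τ * |x| - τ ^ 2 / 2

/-- The derivative of the Huber loss. -/
def huberDeriv (τ x : ℝ) : ℝ := if |x| ≤ τ then x else τ * Real.sign x

/-- Empirical Huber loss `L̂_τ(β) = n⁻¹ ∑ᵢ ℓ_τ(yᵢ - ⟨xᵢ, β⟩)`. -/
def empLoss {n d : ℕ} (y : Fin n → ℝ) (X : Fin n → Fin d → ℝ) (τ : ℝ)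
    (β : Fin d → ℝ) : ℝ :=
  (n : ℝ)⁻¹ * ∑ i, huber τ (y i - ∑ j, X i j * β j)

/-- Gradient of the empirical Huber loss:
`∇L̂_τ(β) = -n⁻¹ ∑ᵢ ℓ'_τ(yᵢ - ⟨xᵢ, β⟩) xᵢ`. -/
def empGrad {n d : ℕ} (y : Fin n → ℝ) (X : Fin n → Fin d → ℝ) (τ : ℝ)
    (β : Fin d → ℝ) : Fin d → ℝ :=
  fun j => -(n : ℝ)⁻¹ * ∑ i, huberDeriv τ (y i - ∑ j', X i j' * β j') * X i j

/-- ℓ¹ norm on `Fin d → ℝ`. -/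
def norm1 {d : ℕ} (v : Fin d → ℝ) : ℝ := ∑ j, |v j|

/-- Euclidean (ℓ²) norm on `Fin d → ℝ`. -/
def norm2 {d : ℕ} (v : Fin d → ℝ) : ℝ := Real.sqrt (∑ j, v j ^ 2)

/-- Sup (ℓ^∞) norm on `Fin d → ℝ`. -/
def normInf {d : ℕ} (v : Fin d → ℝ) : ℝ := ⨆ j, |v j|

/-- The subdifferential of the ℓ¹ norm at `β`. -/
def l1Subdiff {d : ℕ} (β : Fin d → ℝ) : Set (Fin d → ℝ) :=
  {ξ | ∀ j, if β j = 0 then ξ j ∈ Set.Icc (-1 : ℝ) 1 else ξ j = Real.sign (β j)}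

/-- `β` is an `ε`-optimal solution of `min L̂_τ + ‖lam ∘ ·‖₁`:  the suboptimality
measure `ω_lam(β) = min_{ξ ∈ ∂‖β‖₁} ‖∇L̂_τ(β) + lam ∘ ξ‖_∞` is at most `ε`. -/
def IsEpsOptimal {n d : ℕ} (y : Fin n → ℝ) (X : Fin n → Fin d → ℝ) (τ : ℝ)
    (lam : Fin d → ℝ) (ε : ℝ) (β : Fin d → ℝ) : Prop :=
  ∃ ξ ∈ l1Subdiff β, normInf (fun j => empGrad y X τ β j + lam j * ξ j) ≤ ε

lemma huberDeriv_eq_clamp {τ : ℝ} (hτ : 0 < τ) (x : ℝ) :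
    huberDeriv τ x = max (-τ) (min τ x) := by
  unfold huberDeriv
  rcases le_or_gt (|x|) τ with h | h
  · rw [if_pos h]
    rw [abs_le] at h
    rw [min_eq_right h.2, max_eq_right h.1]
  · rw [if_neg (not_le.mpr h)]
    rcases lt_trichotomy x 0 with hx | hx | hx
    · rw [Real.sign_of_neg hx]
      have hx' : x < -τ := by rw [abs_of_neg hx] at h; linarith
      rw [min_eq_right (by linarith), max_eq_left (by linarith)]
      ring
    · rw [hx] at h; simp at h; linarith
    · rw [Real.sign_of_pos hx]
      have hx' : τ < x := by rwa [abs_of_pos hx] at h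
      rw [min_eq_left hx'.le, max_eq_right (by linarith)]
      ring

lemma huberDeriv_monotone {τ : ℝ} (hτ : 0 < τ) : Monotone (huberDeriv τ) := by
  intro a b hab
  rw [huberDeriv_eq_clamp hτ, huberDeriv_eq_clamp hτ]
  exact max_le_max le_rfl (min_le_min le_rfl hab)

lemma sign_mul_self' (x : ℝ) : Real.sign x * x = |x| := by
  rcases lt_trichotomy x 0 with h | h | h
  · rw [Real.sign_of_neg h, abs_of_neg h]; ring
  · simp [h]
  · rw [Real.sign_of_pos h, abs_of_pos h]; ring

lemma abs_sign_le_one (x : ℝ) : |Real.sign x| ≤ 1 := by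
  rcases lt_trichotomy x 0 with h | h | h
  · rw [Real.sign_of_neg h]; norm_num
  · simp [h, Real.sign_zero]
  · rw [Real.sign_of_pos h]; norm_num

lemma abs_le_normInf {d : ℕ} (v : Fin d → ℝ) (j : Fin d) : |v j| ≤ normInf v :=
  le_ciSup (Set.Finite.bddAbove (Set.finite_range fun j => |v j|)) j

lemma normInf_nonneg {d : ℕ} (v : Fin d → ℝ) : 0 ≤ normInf v :=
  Real.iSup_nonneg fun _ => abs_nonneg _

lemma dot_le {d : ℕ} (v u : Fin d → ℝ) : ∑ j, v j * u j ≤ normInf v * ∑ j, |u j| := by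
  rw [Finset.mul_sum]
  apply Finset.sum_le_sum
  intro j _
  calc v j * u j ≤ |v j * u j| := le_abs_self _
    _ = |v j| * |u j| := abs_mul _ _
    _ ≤ normInf v * |u j| := mul_le_mul_of_nonneg_right (abs_le_normInf v j) (abs_nonneg _)

lemma neg_dot_le {d : ℕ} (v u : Fin d → ℝ) :
    -(normInf v * ∑ j, |u j|) ≤ ∑ j, v j * u j := by
  have h := dot_le (fun j => -v j) u
  have hn : normInf (fun j => -v j) = normInf v := by
    unfold normInf; simp [abs_neg]
  rw [hn] at h
  simp only [neg_mul, Finset.sum_neg_distrib] at h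
  linarith

/-- Lemma C.5: cone constraint for `ε`-optimal solutions under a
lower bound on the penalization outside `E`. -/
theorem statement_15 {n d : ℕ} (y : Fin n → ℝ) (X : Fin n → Fin d → ℝ)
    (τ : ℝ) (hτ : 0 < τ)
    (E : Finset (Fin d)) (βs : Fin d → ℝ) (hβs : ∀ j ∉ E, βs j = 0)
    (lam : Fin d → ℝ) (hlam : ∀ j, 0 ≤ lam j)
    (ε lam0 : ℝ) (hε : 0 < ε) (hlam0pos : 0 < lam0)
    (h1 : normInf lam ≤ lam0)
    (h2 : 4 * (normInf (empGrad y X τ βs) + ε) ≤ lam0)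
    (h3 : lam0 / 2 ≤ ⨅ j : {j : Fin d // j ∉ E}, lam (j : Fin d))
    (βt : Fin d → ℝ) (hopt : IsEpsOptimal y X τ lam ε βt) :
    ∑ j ∈ Eᶜ, |βt j - βs j| ≤
      (normInf lam + normInf (empGrad y X τ βs) + ε) /
        ((⨅ j : {j : Fin d // j ∉ E}, lam (j : Fin d)) -
          normInf (empGrad y X τ βs) - ε) *
        ∑ j ∈ E, |βt j - βs j| ∧
    ∑ j ∈ Eᶜ, |βt j - βs j| ≤ 5 * ∑ j ∈ E, |βt j - βs j| := by
  obtain ⟨ξ, hξ, hsub⟩ := hopt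
  set g := normInf (empGrad y X τ βs) with hgdef
  set L := normInf lam with hLdef
  set m := ⨅ j : {j : Fin d // j ∉ E}, lam (j : Fin d) with hmdef
  rcases isEmpty_or_nonempty {j : Fin d // j ∉ E} with he | he
  · exfalso
    rw [hmdef, Real.iInf_of_isEmpty] at h3
    linarith
  set A := ∑ j ∈ E, |βt j - βs j| with hAdef
  set B := ∑ j ∈ Eᶜ, |βt j - βs j| with hBdef
  have hA0 : 0 ≤ A := Finset.sum_nonneg fun j _ => abs_nonneg _
  have hB0 : 0 ≤ B := Finset.sum_nonneg fun j _ => abs_nonneg _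
  have hAB : ∑ j, |βt j - βs j| = A + B :=
    (Finset.sum_add_sum_compl E fun j => |βt j - βs j|).symm
  have hg0 : 0 ≤ g := normInf_nonneg _
  have hL0 : 0 ≤ L := normInf_nonneg _
  have hmle : ∀ j ∉ E, m ≤ lam j := fun j hj =>
    ciInf_le (Set.Finite.bddBelow (Set.finite_range _)) (⟨j, hj⟩ : {j : Fin d // j ∉ E})
  have hξabs : ∀ j, |ξ j| ≤ 1 := by
    intro j
    have hj := hξ j
    by_cases h : βt j = 0
    · rw [if_pos h] at hj; exact abs_le.mpr ⟨hj.1, hj.2⟩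
    · rw [if_neg h] at hj; rw [hj]; exact abs_sign_le_one _
  -- key algebraic identity
  have key : ∀ β : Fin d → ℝ, ∑ j, empGrad y X τ β j * (βt j - βs j)
      = -(n:ℝ)⁻¹ * ∑ i, huberDeriv τ (y i - ∑ j', X i j' * β j')
          * (∑ j, X i j * (βt j - βs j)) := by
    intro β
    unfold empGrad
    simp only [neg_mul, Finset.sum_neg_distrib, Finset.mul_sum, Finset.sum_mul, neg_inj]
    rw [Finset.sum_comm]
    apply Finset.sum_congr rfl
    intro i _
    apply Finset.sum_congr rfl
    intro j _
    ring
  have hXu : ∀ i, ∑ j, X i j * (βt j - βs j)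
      = (y i - ∑ j', X i j' * βs j') - (y i - ∑ j', X i j' * βt j') := by
    intro i
    simp only [mul_sub, Finset.sum_sub_distrib]
    ring
  -- monotonicity of the gradient
  have hmono : ∑ j, empGrad y X τ βs j * (βt j - βs j)
      ≤ ∑ j, empGrad y X τ βt j * (βt j - βs j) := by
    have hid : ∑ j, empGrad y X τ βt j * (βt j - βs j)
        - ∑ j, empGrad y X τ βs j * (βt j - βs j)
        = (n:ℝ)⁻¹ * ∑ i, (huberDeriv τ (y i - ∑ j', X i j' * βt j')
            - huberDeriv τ (y i - ∑ j', X i j' * βs j'))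
            * ((y i - ∑ j', X i j' * βt j') - (y i - ∑ j', X i j' * βs j')) := by
      rw [key βt, key βs]
      rw [show ∀ c s t : ℝ, -c * s - -c * t = c * (t - s) from fun c s t => by ring]
      congr 1
      rw [← Finset.sum_sub_distrib]
      apply Finset.sum_congr rfl
      intro i _
      rw [hXu i]
      ring
    have h0 : 0 ≤ ∑ j, empGrad y X τ βt j * (βt j - βs j)
        - ∑ j, empGrad y X τ βs j * (βt j - βs j) := by
      rw [hid]
      apply mul_nonneg (by positivity)
      apply Finset.sum_nonneg
      intro i _
      rcases le_total (y i - ∑ j', X i j' * βt j') (y i - ∑ j', X i j' * βs j') with h | h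
      · have h1' := sub_nonpos.mpr (huberDeriv_monotone hτ h)
        have h2' := sub_nonpos.mpr h
        nlinarith
      · exact mul_nonneg
          (sub_nonneg.mpr (huberDeriv_monotone hτ h)) (sub_nonneg.mpr h)
    linarith
  -- upper bounds coming from ε-optimality
  have hup1 : ∑ j, (empGrad y X τ βt j + lam j * ξ j) * (βt j - βs j) ≤ ε * (A + B) := by
    calc ∑ j, (empGrad y X τ βt j + lam j * ξ j) * (βt j - βs j)
        ≤ normInf (fun j => empGrad y X τ βt j + lam j * ξ j) * ∑ j, |βt j - βs j| :=
          dot_le _ _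
      _ ≤ ε * (A + B) := by
          rw [hAB]
          exact mul_le_mul hsub le_rfl (by linarith) hε.le
  have hup2 : -(g * (A + B)) ≤ ∑ j, empGrad y X τ βs j * (βt j - βs j) := by
    have h := neg_dot_le (empGrad y X τ βs) (fun j => βt j - βs j)
    rw [hAB] at h
    exact h
  have hsplit : ∑ j, lam j * ξ j * (βt j - βs j)
      = ∑ j, (empGrad y X τ βt j + lam j * ξ j) * (βt j - βs j)
        - ∑ j, empGrad y X τ βt j * (βt j - βs j) := by
    rw [← Finset.sum_sub_distrib]
    apply Finset.sum_congr rfl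
    intros
    ring
  -- lower bound for the subgradient term
  have hlow : m * B - L * A ≤ ∑ j, lam j * ξ j * (βt j - βs j) := by
    rw [← Finset.sum_add_sum_compl E fun j => lam j * ξ j * (βt j - βs j)]
    have hE : -(L * A) ≤ ∑ j ∈ E, lam j * ξ j * (βt j - βs j) := by
      rw [hAdef, Finset.mul_sum, ← Finset.sum_neg_distrib]
      apply Finset.sum_le_sum
      intro j _
      have habs : |lam j * ξ j * (βt j - βs j)| ≤ L * |βt j - βs j| := by
        rw [abs_mul, abs_mul]
        have h1' : |lam j| * |ξ j| ≤ L * 1 :=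
          mul_le_mul (abs_le_normInf lam j) (hξabs j) (abs_nonneg _) hL0
        nlinarith [abs_nonneg (βt j - βs j)]
      linarith [neg_abs_le (lam j * ξ j * (βt j - βs j))]
    have hEc : m * B ≤ ∑ j ∈ Eᶜ, lam j * ξ j * (βt j - βs j) := by
      rw [hBdef, Finset.mul_sum]
      apply Finset.sum_le_sum
      intro j hj
      have hjE : j ∉ E := Finset.mem_compl.mp hj
      have hbs : βs j = 0 := hβs j hjE
      by_cases hb : βt j = 0
      · simp [hbs, hb]
      · have hξj : ξ j = Real.sign (βt j) := by
          have := hξ j; rwa [if_neg hb] at this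
        rw [hbs, sub_zero, hξj, mul_assoc, sign_mul_self']
        exact mul_le_mul_of_nonneg_right (hmle j hjE) (abs_nonneg _)
    linarith
  -- the master inequality
  have hmain : (m - g - ε) * B ≤ (L + g + ε) * A := by
    nlinarith [hlow, hsplit, hup1, hup2, hmono]
  have hD : lam0 / 4 ≤ m - g - ε := by linarith
  have hDpos : 0 < m - g - ε := by linarith
  constructor
  · rw [div_mul_eq_mul_div, le_div_iff₀ hDpos]
    nlinarith [hmain]
  · have hN : L + g + ε ≤ 5 * lam0 / 4 := by linarith
    nlinarith [hmain, mul_le_mul_of_nonneg_right hN hA0,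
      mul_le_mul_of_nonneg_right hD hB0]
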